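/- The c-bounded t-spread Veronese ideal I_{c,(n,d,t)} has linear quotients with respect to the lexicographic order on its minimal generators: if G(I) = {u_1 > ... > u_m} in decreasing lexicographic order, then for each r, the colon ideal (u_1,...,u_{r-1}) : u_r is generated by variables. More precisely, for each k < r there exists a variable x_i ∈ (u_1,...,u_{r-1}) : u_r dividing u_k/gcd(u_k,u_r). -/

import Mathlib

/-- A list (representing a weakly increasing multiset) is `t`-spread if
successive entries differ by at least `t`. -/
def TSpread (t : ℕ) (A : List ℕ) : Prop :=
  A.Chain' (fun a b => a + t ≤ b)

/-- A block (for the parameter `t`) is a nonempty run whose successive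
differences are exactly `t`. -/
def IsBlock (t : ℕ) (B : List ℕ) : Prop :=
  B ≠ [] ∧ B.Chain' (fun a b => b = a + t)

/-- `Bs` is the decomposition of `A` into maximal blocks. -/
def IsBlockDecomp (t : ℕ) (A : List ℕ) (Bs : List (List ℕ)) : Prop :=
  A = Bs.flatten ∧ (∀ B ∈ Bs, IsBlock t B) ∧
    Bs.Chain' (fun B C => ∀ x ∈ B.getLast?, ∀ y ∈ C.head?, x + t < y)

/-- `A` is `c`-bounded: every block of its (unique) maximal block
decomposition has size at most `c`. -/
def CBounded (c t : ℕ) (A : List ℕ) : Prop :=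
  ∀ Bs, IsBlockDecomp t A Bs → ∀ B ∈ Bs, B.length ≤ c

/-- The set of (sorted index lists of) minimal monomial generators of the
`c`-bounded `t`-spread Veronese ideal `I_{c,(n,d,t)}`. -/
def Gen (c n d t : ℕ) : Set (List ℕ) :=
  {A | A.length = d ∧ TSpread t A ∧ CBounded c t A ∧ ∀ i ∈ A, 1 ≤ i ∧ i ≤ n}

/-- Monomial associated to a multiset of indices in `{1, …, n}`. -/
noncomputable def monList (K : Type*) [Field K] (n : ℕ) (A : List ℕ) :
    MvPolynomial (Fin n) K :=
  (A.map (fun i => if h : i - 1 < n then MvPolynomial.X (⟨i - 1, h⟩ : Fin n) else 1)).prod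


open MvPolynomial

def blocks (t : ℕ) : List ℕ → List (List ℕ)
  | [] => []
  | a :: l =>
    match blocks t l with
    | [] => [[a]]
    | B :: Bs => if B.head? = some (a + t) then (a :: B) :: Bs else [a] :: B :: Bs

lemma blocks_flatten (t : ℕ) : ∀ A : List ℕ, (blocks t A).flatten = A := by
  intro A
  induction A with
  | nil => rfl
  | cons a l ih =>
    cases h : blocks t l with
    | nil => simp [blocks, h] at ih ⊢; exact ih.symm ▸ rfl
    | cons B Bs =>
      rw [h] at ih
      by_cases hB : B.head? = some (a + t) <;> simp [blocks, h, hB] at ih ⊢ <;> simp [ih]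

lemma blocks_isBlock (t : ℕ) : ∀ A B, B ∈ blocks t A → IsBlock t B := by
  intro A
  induction A with
  | nil => intro B hB; simp [blocks] at hB
  | cons a l ih =>
    intro B hB
    cases h : blocks t l with
    | nil =>
      rw [blocks, h] at hB; simp at hB; subst hB
      exact ⟨by simp, List.isChain_singleton a⟩
    | cons C Cs =>
      rw [blocks, h] at hB
      by_cases hC : C.head? = some (a + t) <;> simp [hC] at hB
      · rcases hB with rfl | hB
        · refine ⟨by simp, List.isChain_cons.2 ⟨?_, (ih C (by simp [h])).2⟩⟩
          intro y hy; rw [hC] at hy; exact (Option.mem_some_iff.1 hy).symm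
        · exact ih B (by simp [h]; tauto)
      · rcases hB with rfl | rfl | hB
        · exact ⟨by simp, List.isChain_singleton a⟩
        · exact ih _ (by simp [h])
        · exact ih B (by simp [h]; tauto)

lemma blocks_nil_eq (t a : ℕ) (l : List ℕ) (h : blocks t l = []) :
    blocks t (a :: l) = [[a]] := by rw [blocks, h]

lemma blocks_cons_eq (t a : ℕ) (l : List ℕ) (B : List ℕ) (Bs : List (List ℕ))
    (h : blocks t l = B :: Bs) :
    blocks t (a :: l) = if B.head? = some (a + t) then (a :: B) :: Bs
      else [a] :: B :: Bs := by rw [blocks, h]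

lemma blocks_head (t a : ℕ) (l : List ℕ) :
    ∃ C Cs, blocks t (a :: l) = C :: Cs ∧ C.head? = some a := by
  cases h : blocks t l with
  | nil => exact ⟨[a], [], blocks_nil_eq t a l h, rfl⟩
  | cons B Bs =>
    by_cases hB : B.head? = some (a + t)
    · exact ⟨a :: B, Bs, by rw [blocks_cons_eq t a l B Bs h, if_pos hB], rfl⟩
    · exact ⟨[a], B :: Bs, by rw [blocks_cons_eq t a l B Bs h, if_neg hB], rfl⟩

lemma blocks_sep (t : ℕ) : ∀ A : List ℕ, TSpread t A →
    (blocks t A).Chain' (fun B C => ∀ x ∈ B.getLast?, ∀ y ∈ C.head?, x + t < y) := by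
  intro A
  induction A with
  | nil => intro _; simp [blocks]; exact List.isChain_nil
  | cons a l ih =>
    intro hts
    have htl : TSpread t l := (List.isChain_cons.1 hts).2
    have hhead : ∀ y ∈ l.head?, a + t ≤ y := (List.isChain_cons.1 hts).1
    have ihl := ih htl
    cases h : blocks t l with
    | nil => rw [blocks, h]; exact List.isChain_singleton _
    | cons B Bs =>
      rw [h] at ihl
      have hBne : B ≠ [] := (blocks_isBlock t l B (by rw [h]; simp)).1
      have hBhead : B.head? = l.head? := by
        have := blocks_flatten t l
        rw [h] at this
        rw [← this]
        cases B with
        | nil => exact absurd rfl hBne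
        | cons b B' => simp
      by_cases hB : B.head? = some (a + t)
      · rw [blocks_cons_eq t a l B Bs h, if_pos hB]
        refine List.isChain_cons.2 ⟨?_, (List.isChain_cons.1 ihl).2⟩
        intro C hC x hx y hy
        have hgl : (a :: B).getLast? = B.getLast? := by
          cases B with
          | nil => exact absurd rfl hBne
          | cons b B' => simp [List.getLast?_cons_cons]
        rw [hgl] at hx
        exact (List.isChain_cons.1 ihl).1 C hC x hx y hy
      · rw [blocks_cons_eq t a l B Bs h, if_neg hB]
        refine List.isChain_cons.2 ⟨?_, ihl⟩
        intro y hy x hx z hz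
        simp at hx; subst hx
        rw [hBhead] at hB
        cases hl : l.head? with
        | none =>
          exfalso
          rw [show y = B from (by simpa using hy : B = y).symm, hBhead, hl] at hz; simp at hz
        | some w =>
          have : z = w := by
            rw [show y = B from (by simpa using hy : B = y).symm, hBhead, hl] at hz
            exact (by simpa using hz : w = z).symm
          subst this
          have h1 : a + t ≤ z := hhead z hl
          have h2 : z ≠ a + t := by rw [hl] at hB; intro hzz; exact hB (by rw [hzz])
          omega

lemma run_prefix_block (t : ℕ) : ∀ (L : List ℕ) (A : List ℕ) (a : ℕ),
    (a :: L).Chain' (fun x y => y = x + t) → (a :: L) <+: A →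
    ∃ C Cs, blocks t A = C :: Cs ∧ C.head? = some a ∧ L.length + 1 ≤ C.length := by
  intro L
  induction L with
  | nil =>
    intro A a _ hpre
    cases A with
    | nil => simp at hpre
    | cons x A' =>
      have hx : x = a := by
        rcases hpre with ⟨r, hr⟩; simp at hr; omega
      subst hx
      obtain ⟨C, Cs, hC, hh⟩ := blocks_head t x A'
      refine ⟨C, Cs, hC, hh, ?_⟩
      cases C with
      | nil => simp at hh
      | cons _ _ => simp
  | cons b L' ih =>
    intro A a hchain hpre
    cases A with
    | nil => simp at hpre
    | cons x A' =>
      have hx : x = a := by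
        rcases hpre with ⟨r, hr⟩; simp at hr; omega
      subst hx
      have hpre' : (b :: L') <+: A' := by
        rcases hpre with ⟨r, hr⟩
        exact ⟨r, by simpa using hr⟩
      have hb : b = x + t := (List.isChain_cons_cons.1 hchain).1
      obtain ⟨C, Cs, hC, hh, hlen⟩ := ih A' b (List.isChain_cons_cons.1 hchain).2 hpre'
      rw [hb] at hh
      refine ⟨x :: C, Cs, ?_, rfl, ?_⟩
      · rw [blocks_cons_eq t x A' C Cs hC, if_pos hh]
      · simp at hlen ⊢; omega

lemma run_le_block (t : ℕ) : ∀ (A L : List ℕ), L ≠ [] →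
    L.Chain' (fun x y => y = x + t) → L <:+: A →
    ∃ B ∈ blocks t A, L.length ≤ B.length := by
  intro A
  induction A with
  | nil =>
    intro L hne _ hinf
    exact absurd (List.eq_nil_of_infix_nil hinf) hne
  | cons a A' ih =>
    intro L hne hchain hinf
    rcases List.infix_cons_iff.1 hinf with hpre | hinf'
    · cases L with
      | nil => exact absurd rfl hne
      | cons x L' =>
        have hx : x = a := by
          rcases hpre with ⟨r, hr⟩; simp at hr; omega
        subst hx
        obtain ⟨C, Cs, hC, _, hlen⟩ := run_prefix_block t L' (x :: A') x hchain hpre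
        exact ⟨C, by rw [hC]; simp, by simpa using hlen⟩
    · obtain ⟨B, hB, hlen⟩ := ih L hne hchain hinf'
      cases h : blocks t A' with
      | nil => rw [h] at hB; simp at hB
      | cons C Cs =>
        rw [h] at hB
        by_cases hC : C.head? = some (a + t)
        · rw [blocks_cons_eq t a A' C Cs h, if_pos hC]
          rcases (List.mem_cons).1 hB with rfl | hB'
          · exact ⟨a :: B, by simp, by simp; omega⟩
          · exact ⟨B, by simp [hB'], hlen⟩
        · rw [blocks_cons_eq t a A' C Cs h, if_neg hC]
          exact ⟨B, by simp [List.mem_cons.1 hB], hlen⟩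

def RunBounded (c t : ℕ) (A : List ℕ) : Prop :=
  ∀ L : List ℕ, L ≠ [] → L.Chain' (fun x y => y = x + t) → L <:+: A → L.length ≤ c

lemma RunBounded.of_infix {c t : ℕ} {A B : List ℕ} (h : RunBounded c t A)
    (hBA : B <:+: A) : RunBounded c t B :=
  fun L hne hch hinf => h L hne hch (hinf.trans hBA)

lemma cbounded_of_runBounded {c t : ℕ} {A : List ℕ} (h : RunBounded c t A) :
    CBounded c t A := by
  rintro Bs ⟨hflat, hblocks, _⟩ B hB
  exact h B (hblocks B hB).1 (hblocks B hB).2 (hflat ▸ List.infix_of_mem_flatten hB)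

lemma runBounded_of_cbounded {c t : ℕ} {A : List ℕ} (hts : TSpread t A)
    (h : CBounded c t A) : RunBounded c t A := by
  intro L hne hch hinf
  obtain ⟨B, hB, hlen⟩ := run_le_block t A L hne hch hinf
  have hdecomp : IsBlockDecomp t A (blocks t A) :=
    ⟨(blocks_flatten t A).symm, blocks_isBlock t A, blocks_sep t A hts⟩
  exact le_trans hlen (h (blocks t A) hdecomp B hB)

lemma runBounded_append {c t : ℕ} {X Y : List ℕ} (hX : RunBounded c t X)
    (hY : RunBounded c t Y)
    (hgap : ∀ x ∈ X.getLast?, ∀ y ∈ Y.head?, x + t ≠ y) :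
    RunBounded c t (X ++ Y) := by
  intro L hne hch hinf
  obtain ⟨U, V, hUV⟩ := hinf
  rcases List.append_eq_append_iff.1 (by simpa [List.append_assoc] using hUV :
      U ++ (L ++ V) = X ++ Y) with ⟨a, ha1, ha2⟩ | ⟨a, ha1, ha2⟩
  · -- X = U ++ a, L ++ V = a ++ Y
    rcases List.append_eq_append_iff.1 ha2 with ⟨b, hb1, hb2⟩ | ⟨b, hb1, hb2⟩
    · -- a = L ++ b
      exact hX L hne hch ⟨U, b, by rw [ha1, hb1, List.append_assoc]⟩
    · -- L = a ++ b, Y = b ++ V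
      rcases eq_or_ne a [] with rfl | hane
      · exact hY L hne hch ⟨[], V, by simpa using ha2⟩
      rcases eq_or_ne b [] with rfl | hbne
      · exact hX L hne hch ⟨U, [], by simp [ha1, hb1]⟩
      · exfalso
        obtain ⟨b0, b', rfl⟩ := List.exists_cons_of_ne_nil hbne
        obtain ⟨a', x0, rfl⟩ := (List.eq_nil_or_concat a).resolve_left hane
        have hlast : x0 ∈ X.getLast? := by
          rw [ha1]; simp [List.concat_eq_append, ← List.append_assoc, List.getLast?_concat]
        have hhead : b0 ∈ Y.head? := by rw [hb2]; rfl
        have hrel : b0 = x0 + t := by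
          subst hb1
          have := (List.isChain_append.1 hch).2.2
          exact this x0 (by simp [List.concat_eq_append, List.getLast?_concat]) b0 rfl
        exact hgap _ hlast _ hhead hrel.symm
  · -- U = X ++ a, Y = a ++ (L ++ V)
    exact hY L hne hch ⟨a, V, by rw [ha2, List.append_assoc]⟩

lemma lex_append {r : ℕ → ℕ → Prop} (P : List ℕ) {l l' : List ℕ}
    (h : List.Lex r l l') : List.Lex r (P ++ l) (P ++ l') := by
  induction P with
  | nil => exact h
  | cons p P ih => exact List.Lex.cons ih

lemma lex_decomp : ∀ {uk ur : List ℕ}, List.Lex (· < ·) uk ur →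
    uk.length = ur.length →
    ∃ P a b A B, uk = P ++ a :: A ∧ ur = P ++ b :: B ∧ a < b := by
  intro uk ur h
  induction h with
  | nil => intro hlen; simp at hlen
  | @cons a l₁ l₂ h ih =>
    intro hlen
    obtain ⟨P, x, y, A, B, h1, h2, h3⟩ := ih (by simpa using hlen)
    exact ⟨a :: P, x, y, A, B, by rw [h1]; rfl, by rw [h2]; rfl, h3⟩
  | @rel a l₁ b l₂ hab =>
    intro _
    exact ⟨[], a, b, l₁, l₂, rfl, rfl, hab⟩

lemma key_lemma (c n d t : ℕ) {ur uk : List ℕ}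
    (hur : ur ∈ Gen c n d t) (huk : uk ∈ Gen c n d t)
    (hlt : List.Lex (· < ·) uk ur) :
    ∃ q, uk.count q > ur.count q ∧
      ∃ v ∈ Gen c n d t, List.Lex (· < ·) v ur ∧
        (↑v : Multiset ℕ) ≤ q ::ₘ (↑ur : Multiset ℕ) := by
  obtain ⟨hld, hts, hcb, hbd⟩ := hur
  obtain ⟨hld', hts', hcb', hbd'⟩ := huk
  obtain ⟨P, a, b, A, B, rfl, rfl, hab⟩ := lex_decomp hlt (by rw [hld, hld'])
  -- chain facts
  rw [TSpread] at hts hts'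
  obtain ⟨hPc, hbBc, hlinkb⟩ := List.isChain_append.1 hts
  obtain ⟨-, haAc, hlinka⟩ := List.isChain_append.1 hts'
  have hBc : (B : List ℕ).Chain' (fun a b => a + t ≤ b) := (List.isChain_cons.1 hbBc).2
  have hbhead : ∀ y ∈ B.head?, b + t ≤ y := (List.isChain_cons.1 hbBc).1
  haveI : IsTrans ℕ (fun a b => a + t ≤ b) := ⟨fun x y z h1 h2 => by omega⟩
  have hballB : ∀ y ∈ B, b + t ≤ y := fun y hy =>
    List.rel_of_pairwise_cons (List.isChain_iff_pairwise.1 hbBc) hy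
  refine ⟨a, ?_, P ++ a :: B, ⟨?_, ?_, ?_, ?_⟩, ?_, ?_⟩
  · -- counts
    have hcount0 : (b :: B).count a = 0 := by
      rw [List.count_eq_zero]
      intro ha
      rcases List.mem_cons.1 ha with rfl | ha
      · omega
      · have := hballB a ha; omega
    rw [List.count_append, List.count_append, hcount0, List.count_cons_self]
    omega
  · -- length
    have h1 := hld
    simp at h1 ⊢; omega
  · -- TSpread
    refine List.isChain_append.2 ⟨hPc, ?_, ?_⟩
    · refine List.isChain_cons.2 ⟨?_, hBc⟩
      intro y hy
      have := hbhead y hy; omega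
    · intro x hx y hy
      simp at hy
      exact hy ▸ hlinka x hx a rfl
  · -- CBounded
    apply cbounded_of_runBounded
    have hrbP : RunBounded c t (P ++ [a]) :=
      (runBounded_of_cbounded hts' hcb').of_infix
        ⟨[], A, by simp⟩
    have hrbB : RunBounded c t B :=
      (runBounded_of_cbounded hts hcb).of_infix ⟨P ++ [b], [], by simp⟩
    have := runBounded_append hrbP hrbB (by
      intro x hx y hy
      rw [List.getLast?_concat] at hx
      have hx' : a = x := by simpa using hx
      have := hbhead y hy
      omega)
    simpa using this
  · -- bounds
    intro i hi
    rcases List.mem_append.1 hi with hi | hi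
    · exact hbd i (List.mem_append.2 (Or.inl hi))
    · rcases List.mem_cons.1 hi with rfl | hi
      · exact hbd' i (by simp)
      · exact hbd i (by simp [hi])
  · exact lex_append P (List.Lex.rel hab)
  · -- multiset
    have e2 : a ::ₘ (↑(P ++ b :: B) : Multiset ℕ) = ↑((P ++ a :: b :: B : List ℕ)) := by
      rw [Multiset.cons_coe, Multiset.coe_eq_coe]
      exact List.perm_middle.symm
    rw [e2]
    exact Multiset.coe_le.2
      (((((List.sublist_cons_self b B).cons₂ a).append_left P)).subperm)

noncomputable def degF (n : ℕ) (i : ℕ) : Fin n →₀ ℕ :=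
  if h : i - 1 < n then Finsupp.single (⟨i - 1, h⟩ : Fin n) 1 else 0

noncomputable def deg (n : ℕ) (A : List ℕ) : Fin n →₀ ℕ :=
  (A.map (degF n)).sum

lemma deg_nil (n : ℕ) : deg n ([] : List ℕ) = 0 := rfl

lemma deg_cons (n a : ℕ) (A : List ℕ) : deg n (a :: A) = degF n a + deg n A := by
  simp [deg]

lemma monList_eq (K : Type*) [Field K] (n : ℕ) (A : List ℕ) :
    monList K n A = monomial (deg n A) 1 := by
  induction A with
  | nil =>
    simp [monList, deg_nil]
  | cons a A ih =>
    rw [monList, List.map_cons, List.prod_cons, ← monList, ih, deg_cons, degF]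
    split
    · rw [monomial_single_add, pow_one]
    · simp

lemma deg_apply (n : ℕ) (A : List ℕ) (q : ℕ) (h1 : 1 ≤ q) (hq : q ≤ n)
    (hA : ∀ i ∈ A, 1 ≤ i) :
    deg n A ⟨q - 1, by omega⟩ = A.count q := by
  induction A with
  | nil => simp [deg_nil]
  | cons a A ih =>
    have ha : 1 ≤ a := hA a (by simp)
    have ih' := ih (fun i hi => hA i (by simp [hi]))
    rw [deg_cons, Finsupp.add_apply, ih', List.count_cons, degF]
    by_cases hqa : a = q
    · subst hqa
      rw [dif_pos (by omega)]
      simp [Finsupp.single_apply]; omega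
    · split
      · rw [Finsupp.single_apply, if_neg (by simp [Fin.ext_iff]; omega)]
        simp [hqa]
      · simp [hqa]

lemma deg_mono {n : ℕ} {A B : List ℕ} (h : (↑A : Multiset ℕ) ≤ ↑B) :
    deg n A ≤ deg n B := by
  have hm : ((↑A : Multiset ℕ).map (degF n)).sum ≤ ((↑B : Multiset ℕ).map (degF n)).sum := by
    obtain ⟨u, hu⟩ := Multiset.le_iff_exists_add.1 (Multiset.map_le_map h)
    rw [hu, Multiset.sum_add]
    exact le_add_of_nonneg_right (zero_le)
  simpa [deg, Multiset.sum_coe] using hm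

lemma X_mul_monomial_one {K : Type*} [Field K] {n : ℕ} (i : Fin n) (s : Fin n →₀ ℕ) :
    (X i : MvPolynomial (Fin n) K) * monomial s 1 = monomial (Finsupp.single i 1 + s) 1 := by
  rw [monomial_single_add, pow_one]

/-- `I_{c,(n,d,t)}` has linear quotients with respect to
the lexicographic order: for a generator `u_r`, the colon of the ideal
generated by the lexicographically larger generators by `u_r` is generated by
variables; more precisely, for every generator `u_k >_lex u_r` there is a
variable `x_q` with `x_q · u_r` in that ideal (i.e. some generator
`v >_lex u_r` divides `x_q u_r`) and `x_q` dividing `u_k / gcd(u_k, u_r)`.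
(For monomials given by ascending index lists, `u >_lex v` as monomials
means the index list of `u` is lexicographically smaller.) -/
theorem stmt_6 (K : Type*) [Field K] (c n d t : ℕ) (ur : List ℕ)
    (hur : ur ∈ Gen c n d t) :
    (∃ V : Set (Fin n),
      (Ideal.span (monList K n '' {v | v ∈ Gen c n d t ∧ List.Lex (· < ·) v ur})).colon
          (Ideal.span {monList K n ur}) =
        Ideal.span ((fun i => (X i : MvPolynomial (Fin n) K)) '' V)) ∧
    ∀ uk ∈ Gen c n d t, List.Lex (· < ·) uk ur →
      ∃ q, uk.count q > ur.count q ∧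
        ∃ v ∈ Gen c n d t, List.Lex (· < ·) v ur ∧
          (↑v : Multiset ℕ) ≤ q ::ₘ (↑ur : Multiset ℕ) := by
  constructor
  · set S₀ : Set (List ℕ) := {v | v ∈ Gen c n d t ∧ List.Lex (· < ·) v ur} with hS₀
    set J : Ideal (MvPolynomial (Fin n) K) := Ideal.span (monList K n '' S₀) with hJdef
    have hJ : J = Ideal.span ((fun s => monomial s (1 : K)) '' (deg n '' S₀)) := by
      rw [hJdef, Set.image_image]
      congr 1
      exact Set.image_congr fun v _ => monList_eq K n v
    refine ⟨{i | (X i : MvPolynomial (Fin n) K) * monList K n ur ∈ J}, ?_⟩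
    apply le_antisymm
    · intro f hf
      rw [Ideal.mem_colon_span_singleton, monList_eq, hJ] at hf
      have hXimg : ((fun i => (X i : MvPolynomial (Fin n) K)) ''
          {i | (X i : MvPolynomial (Fin n) K) * monList K n ur ∈ J}) =
          (fun s => monomial s (1 : K)) '' ((fun i : Fin n => Finsupp.single i 1) ''
            {i | (X i : MvPolynomial (Fin n) K) * monList K n ur ∈ J}) := by
        rw [Set.image_image]
        exact Set.image_congr fun i _ => rfl
      rw [hXimg, mem_ideal_span_monomial_image]
      intro ξ hξ
      have hξu : ξ + deg n ur ∈ (f * monomial (deg n ur) (1 : K)).support := by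
        rw [mem_support_iff, coeff_mul_monomial, mul_one]
        exact mem_support_iff.1 hξ
      obtain ⟨σ, hσ, hle⟩ := mem_ideal_span_monomial_image.1 hf _ hξu
      obtain ⟨v, hvS, rfl⟩ := hσ
      obtain ⟨q, hcount, w, hwGen, hwLex, hwle⟩ :=
        key_lemma c n d t hur hvS.1 hvS.2
      have hqv : q ∈ v := List.count_pos_iff.1 (by omega)
      have hq1 : 1 ≤ q := (hvS.1.2.2.2 q hqv).1
      have hqn : q ≤ n := (hvS.1.2.2.2 q hqv).2
      set i : Fin n := ⟨q - 1, by omega⟩ with hi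
      have hvq : deg n v i = v.count q :=
        deg_apply n v q hq1 hqn (fun x hx => (hvS.1.2.2.2 x hx).1)
      have hurq : deg n ur i = ur.count q :=
        deg_apply n ur q hq1 hqn (fun x hx => (hur.2.2.2 x hx).1)
      have hξi : 1 ≤ ξ i := by
        have h1 := hle i
        rw [Finsupp.add_apply] at h1
        omega
      refine ⟨Finsupp.single i 1, ⟨i, ?_, rfl⟩, Finsupp.single_le_iff.2 hξi⟩
      show (X i : MvPolynomial (Fin n) K) * monList K n ur ∈ J
      have hwle' : deg n w ≤ Finsupp.single i 1 + deg n ur := by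
        have h2 : deg n w ≤ deg n (q :: ur) := by
          apply deg_mono
          rw [← Multiset.cons_coe]
          exact hwle
        rwa [deg_cons, degF, dif_pos (by omega : q - 1 < n)] at h2
      rw [monList_eq, X_mul_monomial_one, hJ]
      have hmem : monomial (deg n w) (1 : K) ∈
          Ideal.span ((fun s => monomial s (1 : K)) '' (deg n '' S₀)) :=
        Ideal.subset_span ⟨deg n w, ⟨w, ⟨hwGen, hwLex⟩, rfl⟩, rfl⟩
      have heq : (monomial (Finsupp.single i 1 + deg n ur) (1 : K)) =
          monomial (Finsupp.single i 1 + deg n ur - deg n w) 1 *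
            monomial (deg n w) 1 := by
        rw [monomial_mul, one_mul, tsub_add_cancel_of_le hwle']
      rw [heq]
      exact Ideal.mul_mem_left _ _ hmem
    · rw [Ideal.span_le]
      rintro _ ⟨i, hi, rfl⟩
      exact Ideal.mem_colon_span_singleton.2 hi
  · exact fun uk huk hlt => key_lemma c n d t hur huk hlt
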